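/- For every integer n with n ≥ 2 and n ≡ 2 (mod 4), the n-dimensional simplified shuffle-cube SSQ_n is vertex-transitive, i.e., for any two vertices u and v of SSQ_n there is a graph automorphism of SSQ_n mapping u to v. -/

import Mathlib

/-- Vertices of the `n`-dimensional simplified shuffle-cube: binary strings of
length `n` (encoded as functions `ℕ → Bool` vanishing from position `n` on)
such that for every `j` with `1 ≤ j ≤ (n-2)/4` the bits in positions
`4j+1` and `4j` are equal. -/
def SSQVertex (n : ℕ) : Type :=
  {u : ℕ → Bool // (∀ i, n ≤ i → u i = false) ∧
    ∀ j, 1 ≤ j → j ≤ (n - 2) / 4 → u (4 * j + 1) = u (4 * j)}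

/-- The set `V₀₀` = {1111, 0001, 0010, 0011} of 4-bit patterns
(most significant bit first). -/
def V00 : Set (Bool × Bool × Bool × Bool) :=
  {(true, true, true, true), (false, false, false, true),
   (false, false, true, false), (false, false, true, true)}

/-- The adjacency condition of the simplified shuffle-cube: either the two
strings agree everywhere except in exactly one of the bits in positions `1`
and `0`, or there is a `j` with `1 ≤ j ≤ (n-2)/4` such that the strings agree
outside the positions `4j-2, …, 4j+1` and the bitwise XOR of the `j`-th 4-bit
blocks lies in `V₀₀`. -/
def ssqRel (n : ℕ) (u v : ℕ → Bool) : Prop :=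
  ((∀ i, 2 ≤ i → u i = v i) ∧ ((u 0 = v 0) ↔ ¬ (u 1 = v 1))) ∨
  (∃ j, 1 ≤ j ∧ j ≤ (n - 2) / 4 ∧
    (∀ i, (i < 4 * j - 2 ∨ 4 * j + 1 < i) → u i = v i) ∧
    (xor (u (4 * j + 1)) (v (4 * j + 1)), xor (u (4 * j)) (v (4 * j)),
     xor (u (4 * j - 1)) (v (4 * j - 1)), xor (u (4 * j - 2)) (v (4 * j - 2))) ∈ V00)

/-- The `n`-dimensional simplified shuffle-cube `SSQ_n`. -/
def SSQ (n : ℕ) : SimpleGraph (SSQVertex n) :=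
  SimpleGraph.fromRel (fun u v => ssqRel n u.1 v.1)

lemma xor_eq_xor_iff (a b w : Bool) : (xor a w = xor b w) ↔ (a = b) := by
  cases a <;> cases b <;> cases w <;> simp

lemma xor_xor_xor (a b w : Bool) : xor (xor a w) (xor b w) = xor a b := by
  cases a <;> cases b <;> cases w <;> simp

lemma ssqRel_xor (n : ℕ) (w a b : ℕ → Bool) :
    ssqRel n (fun i => xor (a i) (w i)) (fun i => xor (b i) (w i)) ↔ ssqRel n a b := by
  unfold ssqRel
  simp only [xor_eq_xor_iff, xor_xor_xor]

/-- For every `n ≥ 2` with `n ≡ 2 (mod 4)`, the simplified shuffle-cube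
`SSQ_n` is vertex-transitive. -/
theorem ssq_vertexTransitive (n : ℕ) (hn : 2 ≤ n) (hmod : n % 4 = 2)
    (u v : SSQVertex n) :
    ∃ φ : SSQ n ≃g SSQ n, φ u = v := by
  set w : ℕ → Bool := fun i => xor (u.1 i) (v.1 i) with hw
  have hf : ∀ x : SSQVertex n, (∀ i, n ≤ i → xor (x.1 i) (w i) = false) ∧
      ∀ j, 1 ≤ j → j ≤ (n - 2) / 4 →
        xor (x.1 (4 * j + 1)) (w (4 * j + 1)) = xor (x.1 (4 * j)) (w (4 * j)) := by
    intro x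
    refine ⟨fun i hi => ?_, fun j h1 h2 => ?_⟩
    · simp [hw, x.2.1 i hi, u.2.1 i hi, v.2.1 i hi]
    · simp [hw, x.2.2 j h1 h2, u.2.2 j h1 h2, v.2.2 j h1 h2]
  let f : SSQVertex n → SSQVertex n := fun x => ⟨fun i => xor (x.1 i) (w i), hf x⟩
  have hinv : Function.Involutive f := by
    intro x
    apply Subtype.ext
    funext i
    simp [f, xor_xor_xor]
  have hadj : ∀ a b : SSQVertex n, (SSQ n).Adj (f a) (f b) ↔ (SSQ n).Adj a b := by
    intro a b
    simp only [SSQ, SimpleGraph.fromRel_adj]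
    constructor
    · rintro ⟨hne, h⟩
      refine ⟨fun h' => hne (by rw [h']), ?_⟩
      rcases h with h | h
      · exact Or.inl ((ssqRel_xor n w a.1 b.1).mp h)
      · exact Or.inr ((ssqRel_xor n w b.1 a.1).mp h)
    · rintro ⟨hne, h⟩
      refine ⟨fun h' => hne (by rw [← hinv a, h', hinv b]), ?_⟩
      rcases h with h | h
      · exact Or.inl ((ssqRel_xor n w a.1 b.1).mpr h)
      · exact Or.inr ((ssqRel_xor n w b.1 a.1).mpr h)
  refine ⟨⟨hinv.toPerm, hadj _ _⟩, ?_⟩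
  apply Subtype.ext
  funext i
  show xor (u.1 i) (xor (u.1 i) (v.1 i)) = v.1 i
  cases u.1 i <;> simp
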